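/- Every coordinate-wise minimum of the sparsity-constrained problem is a basic feasible vector: if x* ∈ C_s is a CW-minimum, then ∇ᵢf(x*) = 0 for every i in the support of x* (and ∇f(x*) = 0 in case ‖x*‖₀ < s). -/

import Mathlib

noncomputable section
open scoped RealInnerProductSpace

lemma key {n : ℕ} (f : EuclideanSpace ℝ (Fin n) → ℝ) (hf : ContDiff ℝ 1 f)
    (c : EuclideanSpace ℝ (Fin n)) (i : Fin n) (t₀ : ℝ)
    (h : ∀ t, f (c + EuclideanSpace.single i t₀) ≤ f (c + EuclideanSpace.single i t)) :
    gradient f (c + EuclideanSpace.single i t₀) i = 0 := by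
  set x := c + EuclideanSpace.single i t₀ with hx
  set v : EuclideanSpace ℝ (Fin n) := EuclideanSpace.single i (1:ℝ) with hv
  have hsm : ∀ t : ℝ, t • v = EuclideanSpace.single i t := by
    intro t
    ext j
    simp [hv, EuclideanSpace.single_apply, mul_comm]
  have hline : HasDerivAt (fun t : ℝ => c + t • v) v t₀ :=
    ((hasDerivAt_id t₀).smul_const v).const_add c |>.congr_deriv (one_smul ℝ v)
  have hg : HasGradientAt f (gradient f x) x :=
    ((hf.differentiable one_ne_zero) x).hasGradientAt
  have hfd : HasFDerivAt f (InnerProductSpace.toDual ℝ _ (gradient f x)) x :=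
    hasGradientAt_iff_hasFDerivAt.mp hg
  have hxe : c + t₀ • v = x := by rw [hsm, hx]
  rw [← hxe] at hfd
  have hcomp : HasDerivAt (fun t : ℝ => f (c + t • v))
      ((InnerProductSpace.toDual ℝ _ (gradient f x)) v) t₀ := by
    have h1 := hfd.comp_hasDerivAt t₀ hline
    rw [hxe] at h1
    exact h1
  have hmin : IsLocalMin (fun t : ℝ => f (c + t • v)) t₀ := by
    apply Filter.Eventually.of_forall
    intro t
    simpa [hsm] using h t
  have hz := hmin.hasDerivAt_eq_zero hcomp
  have : ⟪gradient f x, v⟫ = 0 := hz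
  rw [hv, real_inner_comm] at this
  rw [EuclideanSpace.inner_single_left] at this
  simpa using this


/-- the number of nonzero components of `x` -/
def norm0 {n : ℕ} (x : EuclideanSpace ℝ (Fin n)) : ℕ :=
  (Finset.univ.filter fun i => x i ≠ 0).card

/-- the sparsity constraint set `C_s` -/
def Cs (n s : ℕ) : Set (EuclideanSpace ℝ (Fin n)) := {x | norm0 x ≤ s}

/-- the set-valued Euclidean projection onto `Cs n s` -/
def projCs (n s : ℕ) (w : EuclideanSpace ℝ (Fin n)) : Set (EuclideanSpace ℝ (Fin n)) :=
  {y | y ∈ Cs n s ∧ ∀ z ∈ Cs n s, ‖y - w‖ ≤ ‖z - w‖}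

/-- the s-th largest absolute value of a component of `x` -/
def Msval {n : ℕ} (s : ℕ) (x : EuclideanSpace ℝ (Fin n)) : ℝ :=
  (((List.ofFn fun i => |x i|).mergeSort (· ≥ ·)).getD (s - 1) 0)

/-- Every coordinate-wise minimum is a basic feasible vector. -/
theorem stmt9 {n s : ℕ} (f : EuclideanSpace ℝ (Fin n) → ℝ) (hf : ContDiff ℝ 1 f)
    (xs : EuclideanSpace ℝ (Fin n)) (hxs : norm0 xs ≤ s)
    (hcw : (norm0 xs < s ∧ ∀ i : Fin n, ∀ t : ℝ,
        f xs ≤ f (xs + EuclideanSpace.single i t)) ∨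
      (norm0 xs = s ∧ ∀ i : Fin n, xs i ≠ 0 → ∀ j : Fin n, ∀ t : ℝ,
        f xs ≤ f (xs - EuclideanSpace.single i (xs i) + EuclideanSpace.single j t))) :
    (∀ i, xs i ≠ 0 → gradient f xs i = 0) ∧
    (norm0 xs < s → gradient f xs = 0) := by
  rcases hcw with ⟨hlt, h⟩ | ⟨heq, h⟩
  · have hall : ∀ i, gradient f xs i = 0 := by
      intro i
      have h0 : EuclideanSpace.single i (0:ℝ) = 0 := by
        ext j; simp [EuclideanSpace.single_apply]
      have h' : ∀ t, f (xs + EuclideanSpace.single i (0:ℝ)) ≤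
          f (xs + EuclideanSpace.single i t) := by
        intro t; simpa [h0] using h i t
      simpa [h0] using key f hf xs i 0 h'
    exact ⟨fun i _ => hall i, fun _ => by ext i; simpa using hall i⟩
  · constructor
    · intro i hi
      have h' : ∀ t, f ((xs - EuclideanSpace.single i (xs i)) + EuclideanSpace.single i (xs i)) ≤
          f ((xs - EuclideanSpace.single i (xs i)) + EuclideanSpace.single i t) := by
        intro t
        simpa [sub_add_cancel] using h i hi i t
      simpa [sub_add_cancel] using key f hf (xs - EuclideanSpace.single i (xs i)) i (xs i) h'
    · intro hlt; omega
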